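/- For the torus with radii R > r > 0 and any u, v, θ, φ ∈ ℝ, setting X = p(u, θ), Y = p(v, φ), Z₁ = p(v, θ), Z₂ = p(u, φ), the four points form an isosceles trapezoid and one has the exact identity ‖X − Y‖² = ‖X − Z₂‖² + ‖X − Z₁‖ · ‖Y − Z₂‖, where ‖·‖ is the Euclidean norm on ℝ³. -/
import Mathlib


open Real

/-- The torus of radii `(R, r)` parametrized by longitude `u` and latitude `θ`,
as a point of Euclidean 3-space. -/
noncomputable def torusPoint (R r u θ : ℝ) : EuclideanSpace ℝ (Fin 3) :=
  (WithLp.equiv 2 (Fin 3 → ℝ)).symm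
    ![(R - r * Real.cos θ) * Real.cos u, (R - r * Real.cos θ) * Real.sin u, r * Real.sin θ]

lemma torus_normsq (R r u θ v φ : ℝ) :
    ‖torusPoint R r u θ - torusPoint R r v φ‖ ^ 2 =
      ((R - r * Real.cos θ) * Real.cos u - (R - r * Real.cos φ) * Real.cos v) ^ 2 +
      ((R - r * Real.cos θ) * Real.sin u - (R - r * Real.cos φ) * Real.sin v) ^ 2 +
      (r * Real.sin θ - r * Real.sin φ) ^ 2 := by
  rw [EuclideanSpace.norm_eq]
  rw [Real.sq_sqrt (by positivity)]
  simp [torusPoint, Fin.sum_univ_three, sq_abs]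

/-- For the torus with radii `R > r > 0` and any `u, v, θ, φ ∈ ℝ`, setting
`X = p(u, θ)`, `Y = p(v, φ)`, `Z₁ = p(v, θ)`, `Z₂ = p(u, φ)`, one has the exact identity
`‖X − Y‖² = ‖X − Z₂‖² + ‖X − Z₁‖ · ‖Y − Z₂‖` (isosceles trapezoid identity). -/
theorem torus_trapezoid_identity (R r : ℝ) (hRr : R > r) (hr : r > 0)
    (u v θ φ : ℝ) :
    ‖torusPoint R r u θ - torusPoint R r v φ‖ ^ 2 =
      ‖torusPoint R r u θ - torusPoint R r u φ‖ ^ 2 +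
        ‖torusPoint R r u θ - torusPoint R r v θ‖ *
          ‖torusPoint R r v φ - torusPoint R r u φ‖ := by
  set A := R - r * Real.cos θ with hAdef
  set B := R - r * Real.cos φ with hBdef
  have hA : 0 ≤ A := by nlinarith [Real.cos_le_one θ]
  have hB : 0 ≤ B := by nlinarith [Real.cos_le_one φ]
  set s := Real.sin ((u - v) / 2) with hsdef
  have hs2 : s ^ 2 = (1 - Real.cos (u - v)) / 2 := by
    have h := Real.cos_two_mul ((u - v) / 2)
    have h' := Real.sin_sq_add_cos_sq ((u - v) / 2)
    rw [show 2 * ((u - v) / 2) = u - v by ring] at h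
    simp only [hsdef]
    linarith
  have hcuv : Real.cos (u - v) = Real.cos u * Real.cos v + Real.sin u * Real.sin v :=
    Real.cos_sub u v
  have h1 := Real.sin_sq_add_cos_sq u
  have h2 := Real.sin_sq_add_cos_sq v
  -- squared lengths of the two legs
  have hXZ1 : ‖torusPoint R r u θ - torusPoint R r v θ‖ ^ 2 = 4 * A ^ 2 * s ^ 2 := by
    rw [torus_normsq]
    linear_combination A ^ 2 * h1 + A ^ 2 * h2 + 2 * A ^ 2 * hcuv - 4 * A ^ 2 * hs2
  have hYZ2 : ‖torusPoint R r v φ - torusPoint R r u φ‖ ^ 2 = 4 * B ^ 2 * s ^ 2 := by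
    rw [torus_normsq]
    linear_combination B ^ 2 * h1 + B ^ 2 * h2 + 2 * B ^ 2 * hcuv - 4 * B ^ 2 * hs2
  have hprod : ‖torusPoint R r u θ - torusPoint R r v θ‖ *
      ‖torusPoint R r v φ - torusPoint R r u φ‖ = 4 * A * B * s ^ 2 := by
    have h3 : (‖torusPoint R r u θ - torusPoint R r v θ‖ *
        ‖torusPoint R r v φ - torusPoint R r u φ‖) ^ 2 = (4 * A * B * s ^ 2) ^ 2 := by
      rw [mul_pow, hXZ1, hYZ2]; ring
    have h4 : 0 ≤ 4 * A * B * s ^ 2 := by positivity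
    have h5 : 0 ≤ ‖torusPoint R r u θ - torusPoint R r v θ‖ *
        ‖torusPoint R r v φ - torusPoint R r u φ‖ := by positivity
    nlinarith [h3, h4, h5]
  rw [hprod, torus_normsq, torus_normsq]
  linear_combination (2 * A * B - B ^ 2) * h1 + B ^ 2 * h2 + 2 * A * B * hcuv - 4 * A * B * hs2
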